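/- The orientation O6 of the octahedron graph K_{2,2,2} in which the three outer vertices form a directed triangle, the three inner vertices form a directed triangle, and the arcs between inner and outer vertices are oriented to make each inner-outer-outer and inner-inner-outer facial triangle directed, admits no acyclic 2-colouring in which the three outer vertices all receive the same colour. -/
import Mathlib


def AcyclicOn {V : Type*} (A : V → V → Prop) (X : Set V) : Prop :=
  ∀ v ∈ X, ¬ Relation.TransGen (fun a b => a ∈ X ∧ b ∈ X ∧ A a b) v v

def IsAcyclicColoring {V : Type*} (A : V → V → Prop) (k : ℕ) (c : V → Fin k) : Prop :=
  ∀ i : Fin k, AcyclicOn A {v | c v = i}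

def IsOrientation {V : Type*} (G : SimpleGraph V) (A : V → V → Prop) : Prop :=
  (∀ a b, A a b → ¬ A b a) ∧ (∀ a b, G.Adj a b ↔ (A a b ∨ A b a))

def SimpleGraph.IsMinor {W V : Type*} (H : SimpleGraph W) (G : SimpleGraph V) : Prop :=
  ∃ f : W → Set V, (∀ w, (f w).Nonempty) ∧ (∀ w, (G.induce (f w)).Connected) ∧
    (Pairwise fun w w' => Disjoint (f w) (f w')) ∧
    ∀ ⦃w w'⦄, H.Adj w w' → ∃ u ∈ f w, ∃ v ∈ f w', G.Adj u v

def SimpleGraph.Planar {V : Type*} (G : SimpleGraph V) : Prop :=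
  ¬ (completeGraph (Fin 5)).IsMinor G ∧ ¬ (completeBipartiteGraph (Fin 3) (Fin 3)).IsMinor G

def IsPlanarTriangulation {V : Type*} [Finite V] (G : SimpleGraph V) : Prop :=
  3 ≤ Nat.card V ∧ G.Planar ∧ ∀ H : SimpleGraph V, G ≤ H → H.Planar → H = G

def IsTriangle {V : Type*} (G : SimpleGraph V) (a b c : V) : Prop :=
  G.Adj a b ∧ G.Adj a c ∧ G.Adj b c

def IsFacialTriangle {V : Type*} (G : SimpleGraph V) (a b c : V) : Prop :=
  IsTriangle G a b c ∧ (G.induce {v | v ≠ a ∧ v ≠ b ∧ v ≠ c}).Preconnected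

def IsSeparatingTriangle {V : Type*} (G : SimpleGraph V) (a b c : V) : Prop :=
  IsTriangle G a b c ∧ ¬ (G.induce {v | v ≠ a ∧ v ≠ b ∧ v ≠ c}).Preconnected

def FourConnected {V : Type*} [Finite V] (G : SimpleGraph V) : Prop :=
  5 ≤ Nat.card V ∧ ∀ S : Set V, Nat.card S ≤ 3 → (G.induce Sᶜ).Connected

/-- The octahedron orientation O6: outer vertices 0,1,2, inner vertices 3,4,5. -/
def O6 (a b : Fin 6) : Prop :=
  (a, b) ∈ ([(0,1),(1,2),(2,0),(3,4),(4,5),(5,3),(1,3),(3,0),(2,4),(4,1),(0,5),(5,2)] :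
    List (Fin 6 × Fin 6))

/-- O6 has no acyclic 2-colouring with the outer triangle monochromatic. -/
theorem stmt_2 :
    ¬ ∃ c : Fin 6 → Fin 2, IsAcyclicColoring O6 2 c ∧ c 0 = c 1 ∧ c 1 = c 2 := by
  rintro ⟨c, hac, h01, h12⟩
  have h0 : (0 : Fin 6) ∈ {v | c v = c 0} := rfl
  have h1 : (1 : Fin 6) ∈ {v | c v = c 0} := h01.symm
  have h2 : (2 : Fin 6) ∈ {v | c v = c 0} := (h01.trans h12).symm
  exact hac (c 0) 0 h0
    (Relation.TransGen.head ⟨h0, h1, by unfold O6; decide⟩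
      (Relation.TransGen.head ⟨h1, h2, by unfold O6; decide⟩
        (Relation.TransGen.single ⟨h2, h0, by unfold O6; decide⟩)))
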